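/- For every g ≥ 1 and every 0 ≤ f ≤ g, the Newton polygon ν_g^f (with f slopes of 0, f slopes of 1, and, if g-f ≥ 3, the slopes 1/(g-f) and (g-f-1)/(g-f) each with multiplicity g-f; if g-f ∈ {1,2}, slope 1/2 with multiplicity 2(g-f)) is a symmetric admissible Newton polygon of height 2g, and it is the unique maximal element among symmetric admissible Newton polygons of height 2g with slope-0 multiplicity f, with respect to the partial order ⪯. -/

import Mathlib

/-- A symmetric admissible Newton polygon of height `2g`, recorded by its
multiplicity function `e : ℚ → ℤ≥0`: finitely supported in `ℚ ∩ [0,1]`,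
with `e(λ)·λ ∈ ℤ`, `e(λ) = e(1-λ)`, and total multiplicity `2g`. -/
def IsSymAdmissibleNP (g : ℕ) (e : ℚ → ℕ) : Prop :=
  (Function.support e).Finite ∧
  (∀ l : ℚ, e l ≠ 0 → 0 ≤ l ∧ l ≤ 1) ∧
  (∀ l : ℚ, ∃ z : ℤ, (e l : ℚ) * l = (z : ℚ)) ∧
  (∀ l : ℚ, e l = e (1 - l)) ∧
  ∑ᶠ l : ℚ, e l = 2 * g

/-- The convex conjugate (support function) of the Newton polygon with
multiplicity function `e`: `t ↦ ∑_λ e(λ)·max(t-λ, 0)`.  The polygon `Γ(e₁)`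
lies on or above `Γ(e₂)` (with the same endpoints) iff the conjugate of `e₁` is
pointwise at most that of `e₂`. -/
noncomputable def npConj (e : ℚ → ℕ) (t : ℚ) : ℚ := ∑ᶠ l : ℚ, (e l : ℚ) * max (t - l) 0

/-- `e₁ ⪯ e₂`: the Newton polygon of `e₁` lies on or above that of `e₂`. -/
def NPOnOrAbove (e₁ e₂ : ℚ → ℕ) : Prop := ∀ t : ℚ, npConj e₁ t ≤ npConj e₂ t

/-- `ν_g^0`: slope `1/2` with multiplicity `2g` if `g ≤ 2`; slopes `1/g` and
`(g-1)/g` each with multiplicity `g` if `g ≥ 3`. -/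
noncomputable def nuZero (g : ℕ) : ℚ → ℕ :=
  if g ≤ 2 then fun l => if l = 1/2 then 2 * g else 0
  else fun l => if l = 1 / (g : ℚ) ∨ l = ((g : ℚ) - 1) / (g : ℚ) then g else 0

/-- `ν_g^f = ν_f^f ⊕ ν_{g-f}^0`: `f` slopes each of `0` and `1`, together with
`ν_{g-f}^0`. -/
noncomputable def nuGF (g f : ℕ) : ℚ → ℕ := fun l =>
  (if l = 0 ∨ l = 1 then f else 0) + nuZero (g - f) l

lemma npConj_eq_sum (e : ℚ → ℕ) {S : Finset ℚ} (hS : Function.support e ⊆ ↑S) (t : ℚ) :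
    npConj e t = ∑ l ∈ S, (e l : ℚ) * max (t - l) 0 := by
  apply finsum_eq_sum_of_support_subset
  intro x hx
  apply hS
  intro hex
  apply hx
  simp [hex]

lemma tot_eq_sum (e : ℚ → ℕ) {S : Finset ℚ} (hS : Function.support e ⊆ ↑S) :
    ∑ᶠ l : ℚ, e l = ∑ l ∈ S, e l :=
  finsum_eq_sum_of_support_subset _ hS

lemma slope_sum {g : ℕ} {e : ℚ → ℕ} (hadm : IsSymAdmissibleNP g e) {S : Finset ℚ}
    (hS : Function.support e ⊆ ↑S) :
    ∑ l ∈ S, (e l : ℚ) * l = g := by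
  obtain ⟨hfin, hbd, hint, hsym, htot⟩ := hadm
  set S₀ := hfin.toFinset with hS₀
  have hmem : ∀ l : ℚ, l ∈ S₀ ↔ e l ≠ 0 := by
    intro l; simp [hS₀, Set.Finite.mem_toFinset, Function.mem_support]
  have hsub : S₀ ⊆ S := by
    intro l hl; exact hS ((hmem l).mp hl)
  have h1 : ∑ l ∈ S, (e l : ℚ) * l = ∑ l ∈ S₀, (e l : ℚ) * l := by
    refine (Finset.sum_subset hsub ?_).symm
    intro x _ hx
    have : e x = 0 := by by_contra h; exact hx ((hmem x).mpr h)
    simp [this]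
  have h2 : ∑ l ∈ S₀, (e l : ℚ) * l = ∑ l ∈ S₀, (e l : ℚ) * (1 - l) := by
    apply Finset.sum_nbij' (i := fun l => 1 - l) (j := fun l => 1 - l)
    · intro a ha
      rw [hmem] at ha ⊢
      rwa [← hsym a]
    · intro a ha
      rw [hmem] at ha ⊢
      rwa [← hsym a]
    · intro a _; ring
    · intro a _; ring
    · intro a _
      rw [hsym a]
      ring_nf
  have h3 : (∑ l ∈ S₀, (e l : ℚ)) = 2 * g := by
    have := tot_eq_sum e (S := S₀) (fun l hl => (hmem l).mpr hl)
    rw [htot] at this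
    exact_mod_cast this.symm
  have h4 : ∑ l ∈ S₀, ((e l : ℚ) * l + (e l : ℚ) * (1 - l)) = 2 * g := by
    have : ∀ l : ℚ, (e l : ℚ) * l + (e l : ℚ) * (1 - l) = (e l : ℚ) := by intro l; ring
    simp_rw [this]; exact h3
  rw [Finset.sum_add_distrib] at h4
  rw [h1]
  linarith [h2]

lemma int_ge_one {g : ℕ} {e : ℚ → ℕ} (hadm : IsSymAdmissibleNP g e) (l : ℚ)
    (hne : e l ≠ 0) (h0 : 0 < l) (h1 : l < 1) :
    1 ≤ (e l : ℚ) * l ∧ 1 ≤ (e l : ℚ) * (1 - l) := by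
  obtain ⟨hfin, hbd, hint, hsym, htot⟩ := hadm
  have key : ∀ x : ℚ, e x ≠ 0 → 0 < x → 1 ≤ (e x : ℚ) * x := by
    intro x hx h0x
    obtain ⟨z, hz⟩ := hint x
    have hpos : 0 < (e x : ℚ) * x := by
      apply mul_pos _ h0x
      exact_mod_cast Nat.pos_of_ne_zero hx
    rw [hz] at hpos ⊢
    exact_mod_cast hpos
  constructor
  · exact key l hne h0
  · have h1l : e (1 - l) ≠ 0 := by rwa [← hsym l]
    have := key (1 - l) h1l (by linarith)
    rwa [← hsym l] at this

lemma middle_facts {g f : ℕ} {e : ℚ → ℕ} (hadm : IsSymAdmissibleNP g e) (he0 : e 0 = f)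
    (hf : f ≤ g) :
    ∃ M : Finset ℚ,
      (∀ l : ℚ, l ∈ M ↔ (e l ≠ 0 ∧ l ≠ 0 ∧ l ≠ 1)) ∧
      Function.support e ⊆ ↑(insert (0:ℚ) (insert 1 M)) ∧
      (0:ℚ) ∉ insert (1:ℚ) M ∧ (1:ℚ) ∉ M ∧
      (∀ l ∈ M, 0 < l ∧ l < 1) ∧
      (∑ l ∈ M, e l = 2 * (g - f)) ∧
      (∑ l ∈ M, (e l : ℚ) * l = (g : ℚ) - f) ∧
      (∀ l ∈ M, l ≠ 1/2 → e l ≤ g - f) := by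
  obtain ⟨hfin, hbd, hint, hsym, htot⟩ := hadm
  have hadm' : IsSymAdmissibleNP g e := ⟨hfin, hbd, hint, hsym, htot⟩
  set S := hfin.toFinset with hSdef
  have hmemS : ∀ l : ℚ, l ∈ S ↔ e l ≠ 0 := by
    intro l; simp [hSdef, Set.Finite.mem_toFinset, Function.mem_support]
  set M := (S.erase 1).erase 0 with hMdef
  have hchar : ∀ l : ℚ, l ∈ M ↔ (e l ≠ 0 ∧ l ≠ 0 ∧ l ≠ 1) := by
    intro l
    simp only [hMdef, Finset.mem_erase, hmemS]
    tauto
  have he1 : e 1 = f := by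
    have := hsym 0
    norm_num at this
    rw [← this, he0]
  refine ⟨M, hchar, ?_, ?_, ?_, ?_, ?_, ?_, ?_⟩
  · intro l hl
    simp only [Finset.coe_insert, Set.mem_insert_iff, Finset.mem_coe]
    by_cases h0 : l = 0
    · left; exact h0
    by_cases h1 : l = 1
    · right; left; exact h1
    · right; right; exact (hchar l).mpr ⟨hl, h0, h1⟩
  · simp only [Finset.mem_insert, hchar]
    norm_num
  · simp only [hchar]
    norm_num
  · intro l hl
    obtain ⟨hne, h0, h1⟩ := (hchar l).mp hl
    obtain ⟨ha, hb⟩ := hbd l hne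
    exact ⟨lt_of_le_of_ne ha (Ne.symm h0), lt_of_le_of_ne hb h1⟩
  · -- sum over M
    have hsupT : Function.support e ⊆ ↑(insert (0:ℚ) (insert 1 M)) := by
      intro l hl
      simp only [Finset.coe_insert, Set.mem_insert_iff, Finset.mem_coe]
      by_cases h0 : l = 0
      · left; exact h0
      by_cases h1 : l = 1
      · right; left; exact h1
      · right; right; exact (hchar l).mpr ⟨hl, h0, h1⟩
    have h0ni : (0:ℚ) ∉ insert (1:ℚ) M := by
      simp only [Finset.mem_insert, hchar]; norm_num
    have h1ni : (1:ℚ) ∉ M := by simp only [hchar]; norm_num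
    have hT := tot_eq_sum e hsupT
    rw [htot, Finset.sum_insert h0ni, Finset.sum_insert h1ni, he0, he1] at hT
    omega
  · have hsupT : Function.support e ⊆ ↑(insert (0:ℚ) (insert 1 M)) := by
      intro l hl
      simp only [Finset.coe_insert, Set.mem_insert_iff, Finset.mem_coe]
      by_cases h0 : l = 0
      · left; exact h0
      by_cases h1 : l = 1
      · right; left; exact h1
      · right; right; exact (hchar l).mpr ⟨hl, h0, h1⟩
    have h0ni : (0:ℚ) ∉ insert (1:ℚ) M := by
      simp only [Finset.mem_insert, hchar]; norm_num
    have h1ni : (1:ℚ) ∉ M := by simp only [hchar]; norm_num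
    have hT := slope_sum hadm' hsupT
    rw [Finset.sum_insert h0ni, Finset.sum_insert h1ni, he0, he1] at hT
    have hfg : ((f:ℚ)) ≤ (g:ℚ) := by exact_mod_cast hf
    push_cast at hT ⊢
    linarith
  · intro l hl hne2
    obtain ⟨hne, h0, h1⟩ := (hchar l).mp hl
    have hl' : (1 - l) ∈ M := by
      rw [hchar]
      refine ⟨by rw [← hsym l]; exact hne, ?_, ?_⟩
      · intro h; apply h1; linarith [sub_eq_zero.mp h]
      · intro h
        apply h0
        have : l = 0 := by linarith [h]
        exact this
    have hlne : l ≠ 1 - l := by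
      intro h
      apply hne2
      linarith [h]
    have hsub : ({l, 1 - l} : Finset ℚ) ⊆ M := by
      intro x hx
      simp only [Finset.mem_insert, Finset.mem_singleton] at hx
      rcases hx with rfl | rfl
      · exact hl
      · exact hl'
    have hle : ∑ x ∈ ({l, 1 - l} : Finset ℚ), e x ≤ ∑ x ∈ M, e x :=
      Finset.sum_le_sum_of_subset hsub
    rw [Finset.sum_pair hlne] at hle
    have hsymval : e (1 - l) = e l := (hsym l).symm
    -- need the M-sum value; rederive
    have hsupT : Function.support e ⊆ ↑(insert (0:ℚ) (insert 1 M)) := by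
      intro x hx
      simp only [Finset.coe_insert, Set.mem_insert_iff, Finset.mem_coe]
      by_cases hx0 : x = 0
      · left; exact hx0
      by_cases hx1 : x = 1
      · right; left; exact hx1
      · right; right; exact (hchar x).mpr ⟨hx, hx0, hx1⟩
    have h0ni : (0:ℚ) ∉ insert (1:ℚ) M := by
      simp only [Finset.mem_insert, hchar]; norm_num
    have h1ni : (1:ℚ) ∉ M := by simp only [hchar]; norm_num
    have hT := tot_eq_sum e hsupT
    rw [htot, Finset.sum_insert h0ni, Finset.sum_insert h1ni, he0, he1] at hT
    omega

lemma forced_small {g f : ℕ} {e : ℚ → ℕ} (hadm : IsSymAdmissibleNP g e) (he0 : e 0 = f)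
    (hf : f ≤ g) (hsmall : g - f ≤ 2) : e = nuGF g f := by
  obtain ⟨M, hchar, hsupT, h0ni, h1ni, hrange, hsumM, hslopeM, hmult⟩ :=
    middle_facts hadm he0 hf
  have he1 : e 1 = f := by
    have := hadm.2.2.2.1 0
    norm_num at this
    rw [← this, he0]
  have hforce : ∀ l ∈ M, l = 1/2 := by
    intro l hl
    by_contra hne2
    obtain ⟨hne, -, -⟩ := (hchar l).mp hl
    obtain ⟨hl0, hl1⟩ := hrange l hl
    obtain ⟨hi1, hi2⟩ := int_ge_one hadm l hne hl0 hl1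
    have hb : e l ≤ g - f := hmult l hl hne2
    have hb2 : (e l : ℚ) ≤ 2 := by
      have : e l ≤ 2 := le_trans hb hsmall
      exact_mod_cast this
    have hq2 : (e l : ℚ) = 2 := by nlinarith
    rw [hq2] at hi1 hi2
    exact hne2 (by linarith)
  have ehalf : e (1/2) = 2 * (g - f) := by
    rw [← hsumM]
    symm
    apply Finset.sum_eq_single
    · intro b hb hbne
      exact absurd (hforce b hb) hbne
    · intro hnm
      by_contra hne
      exact hnm ((hchar _).mpr ⟨hne, by norm_num, by norm_num⟩)
  funext l
  simp only [nuGF, nuZero, if_pos hsmall]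
  by_cases h0 : l = 0
  · subst h0
    rw [he0]
    norm_num
  by_cases h1 : l = 1
  · subst h1
    rw [he1]
    norm_num
  by_cases hh : l = 1/2
  · subst hh
    rw [ehalf]
    norm_num
  · have : e l = 0 := by
      by_contra hne
      exact hh (hforce l ((hchar l).mpr ⟨hne, h0, h1⟩))
    rw [this]
    have hh' : l ≠ 2⁻¹ := by rw [show (2⁻¹:ℚ) = 1/2 by norm_num]; exact hh
    simp [h0, h1, hh, hh']

lemma nuGF_support_big {g f : ℕ} (hbig : 3 ≤ g - f) :
    Function.support (nuGF g f) ⊆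
      ↑({0, 1, 1/((g-f : ℕ):ℚ), (((g-f : ℕ):ℚ) - 1)/((g-f : ℕ):ℚ)} : Finset ℚ) := by
  intro l hl
  simp only [Function.mem_support, nuGF, nuZero, if_neg (by omega : ¬ (g - f ≤ 2))] at hl
  simp only [Finset.coe_insert, Set.mem_insert_iff, Finset.mem_coe, Finset.mem_insert,
    Finset.mem_singleton]
  by_contra hc
  push_neg at hc
  obtain ⟨hc0, hc1, hca, hcb⟩ := hc
  apply hl
  rw [if_neg (by tauto), if_neg (by tauto)]
  norm_num

lemma npConj_nuGF_big {g f : ℕ} (hf : f ≤ g) (hbig : 3 ≤ g - f) (t : ℚ) :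
    npConj (nuGF g f) t = f * max t 0 + f * max (t - 1) 0
      + (g - f : ℕ) * max (t - 1/((g-f : ℕ):ℚ)) 0
      + (g - f : ℕ) * max (t - (((g-f : ℕ):ℚ) - 1)/((g-f : ℕ):ℚ)) 0 := by
  have hq : (3:ℚ) ≤ ((g-f : ℕ):ℚ) := by exact_mod_cast hbig
  have hqpos : (0:ℚ) < ((g-f : ℕ):ℚ) := by linarith
  have hapos : 0 < 1/((g-f : ℕ):ℚ) := by positivity
  have ha1 : 1/((g-f : ℕ):ℚ) < 1 := by rw [div_lt_one hqpos]; linarith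
  have hab : 1/((g-f : ℕ):ℚ) < (((g-f : ℕ):ℚ) - 1)/((g-f : ℕ):ℚ) := by
    rw [div_lt_div_iff₀ hqpos hqpos]; nlinarith
  have hb1 : (((g-f : ℕ):ℚ) - 1)/((g-f : ℕ):ℚ) < 1 := by
    rw [div_lt_one hqpos]; linarith
  have hb0 : 0 < (((g-f : ℕ):ℚ) - 1)/((g-f : ℕ):ℚ) := lt_trans hapos hab
  rw [npConj_eq_sum _ (nuGF_support_big hbig) t]
  have m0 : (0:ℚ) ∉ ({1, 1/((g-f : ℕ):ℚ), (((g-f : ℕ):ℚ) - 1)/((g-f : ℕ):ℚ)} : Finset ℚ) := by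
    simp only [Finset.mem_insert, Finset.mem_singleton]
    push_neg
    refine ⟨by norm_num, ne_of_lt hapos, ne_of_lt hb0⟩
  have m1 : (1:ℚ) ∉ ({1/((g-f : ℕ):ℚ), (((g-f : ℕ):ℚ) - 1)/((g-f : ℕ):ℚ)} : Finset ℚ) := by
    simp only [Finset.mem_insert, Finset.mem_singleton]
    push_neg
    exact ⟨ne_of_gt ha1, ne_of_gt hb1⟩
  have m2 : 1/((g-f : ℕ):ℚ) ∉ ({(((g-f : ℕ):ℚ) - 1)/((g-f : ℕ):ℚ)} : Finset ℚ) := by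
    simp only [Finset.mem_singleton]
    exact ne_of_lt hab
  rw [Finset.sum_insert m0, Finset.sum_insert m1, Finset.sum_insert m2, Finset.sum_singleton]
  have v0 : nuGF g f 0 = f := by
    simp only [nuGF, nuZero, if_neg (by omega : ¬ (g - f ≤ 2))]
    rw [if_pos (by norm_num), if_neg (by push_neg; exact ⟨ne_of_lt hapos, ne_of_lt hb0⟩)]
    omega
  have v1 : nuGF g f 1 = f := by
    simp only [nuGF, nuZero, if_neg (by omega : ¬ (g - f ≤ 2))]
    rw [if_pos (by norm_num), if_neg (by push_neg; exact ⟨ne_of_gt ha1, ne_of_gt hb1⟩)]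
    omega
  have va : nuGF g f (1/((g-f : ℕ):ℚ)) = g - f := by
    simp only [nuGF, nuZero, if_neg (by omega : ¬ (g - f ≤ 2))]
    rw [if_neg (by push_neg; exact ⟨ne_of_gt hapos, ne_of_lt ha1⟩), if_pos (Or.inl trivial)]
    omega
  have vb : nuGF g f ((((g-f : ℕ):ℚ) - 1)/((g-f : ℕ):ℚ)) = g - f := by
    simp only [nuGF, nuZero, if_neg (by omega : ¬ (g - f ≤ 2))]
    rw [if_neg (by push_neg; exact ⟨ne_of_gt hb0, ne_of_lt hb1⟩), if_pos (Or.inr trivial)]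
    omega
  rw [v0, v1, va, vb]
  ring_nf

lemma bound_big {g f : ℕ} {e : ℚ → ℕ} (hadm : IsSymAdmissibleNP g e) (he0 : e 0 = f)
    (hf : f ≤ g) (hbig : 3 ≤ g - f) : NPOnOrAbove e (nuGF g f) := by
  intro t
  obtain ⟨M, hchar, hsupT, h0ni, h1ni, hrange, hsumM, hslopeM, hmult⟩ :=
    middle_facts hadm he0 hf
  have he1 : e 1 = f := by
    have := hadm.2.2.2.1 0
    norm_num at this
    rw [← this, he0]
  rw [npConj_nuGF_big hf hbig t, npConj_eq_sum e hsupT t, Finset.sum_insert h0ni,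
    Finset.sum_insert h1ni, he0, he1, sub_zero]
  set c : ℚ := ((g - f : ℕ) : ℚ) with hcdef
  set a : ℚ := 1 / c with hadef
  set b : ℚ := (c - 1) / c with hbdef
  have hq : (3:ℚ) ≤ c := by rw [hcdef]; exact_mod_cast hbig
  have hqpos : (0:ℚ) < c := by linarith
  have hqne : c ≠ 0 := ne_of_gt hqpos
  have hca : c * a = 1 := by rw [hadef]; field_simp
  have hcb : c * b = c - 1 := by rw [hbdef]; field_simp
  have hapos : 0 < a := by rw [hadef]; positivity
  have hab : a < b := by
    rw [hadef, hbdef, div_lt_div_iff₀ hqpos hqpos]; nlinarith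
  have hba : c * (b - a) = c - 2 := by rw [hadef, hbdef]; field_simp; ring
  have habsum : a + b = 1 := by rw [hadef, hbdef]; field_simp; ring
  -- sums over M
  have hcgf : c = (g : ℚ) - f := by rw [hcdef, Nat.cast_sub hf]
  have hMtot : (∑ l ∈ M, (e l : ℚ)) = 2 * c := by
    have : ((∑ l ∈ M, e l : ℕ) : ℚ) = ((2 * (g - f) : ℕ) : ℚ) := by exact_mod_cast hsumM
    push_cast at this
    rw [this, hcdef]
  have hMslope : (∑ l ∈ M, (e l : ℚ) * l) = c := by rw [hslopeM, hcgf]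
  -- support bounds
  have key : ∀ l ∈ M, a ≤ l ∧ l ≤ b := by
    intro l hl
    obtain ⟨hne, -, -⟩ := (hchar l).mp hl
    obtain ⟨hl0, hl1⟩ := hrange l hl
    obtain ⟨hi1, hi2⟩ := int_ge_one hadm l hne hl0 hl1
    by_cases hhalf : l = 1/2
    · subst hhalf
      constructor
      · rw [hadef, div_le_div_iff₀ hqpos (by norm_num : (0:ℚ) < 2)]; linarith
      · rw [hbdef, div_le_div_iff₀ (by norm_num : (0:ℚ) < 2) hqpos]; linarith
    · have hb' : (e l : ℚ) ≤ c := by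
        rw [hcdef]; exact_mod_cast hmult l hl hhalf
      constructor
      · have h1 : (1:ℚ) ≤ c * l := le_trans hi1 (mul_le_mul_of_nonneg_right hb' hl0.le)
        rw [hadef, div_le_iff₀ hqpos]; linarith
      · have h1 : (1:ℚ) ≤ c * (1 - l) :=
          le_trans hi2 (mul_le_mul_of_nonneg_right hb' (by linarith))
        rw [hbdef, le_div_iff₀ hqpos]; nlinarith
  -- middle bound
  have hmid : (∑ l ∈ M, (e l : ℚ) * max (t - l) 0) ≤ c * max (t - a) 0 + c * max (t - b) 0 := by
    rcases le_or_gt t a with hta | hta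
    · have hz : (∑ l ∈ M, (e l : ℚ) * max (t - l) 0) = 0 := by
        apply Finset.sum_eq_zero
        intro l hl
        have := (key l hl).1
        rw [max_eq_right (by linarith : t - l ≤ 0), mul_zero]
      rw [hz]
      positivity
    · rcases le_or_gt b t with htb | htb
      · -- t ≥ b : equality regime
        have hL : (∑ l ∈ M, (e l : ℚ) * max (t - l) 0) = 2 * c * t - c := by
          have h1 : (∑ l ∈ M, (e l : ℚ) * max (t - l) 0)
              = ∑ l ∈ M, ((e l : ℚ) * t - (e l : ℚ) * l) := by
            apply Finset.sum_congr rfl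
            intro l hl
            have := (key l hl).2
            rw [max_eq_left (by linarith : 0 ≤ t - l)]
            ring
          rw [h1, Finset.sum_sub_distrib, ← Finset.sum_mul, hMtot, hMslope]
        have hs : c * (t - a) + c * (t - b) = 2 * c * t - c := by
          linear_combination (-c) * habsum
        rw [hL, max_eq_left (by linarith : 0 ≤ t - a), max_eq_left (by linarith : 0 ≤ t - b)]
        linarith
      · -- a < t < b : convexity regime
        have hP : (∑ l ∈ M, (e l : ℚ) * max (t - l) 0) * (b - a) ≤ (t - a) * (c - 2) := by
          rw [Finset.sum_mul]
          have h2 : ∑ l ∈ M, (e l : ℚ) * max (t - l) 0 * (b - a)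
              ≤ ∑ l ∈ M, (e l : ℚ) * ((t - a) * (b - l)) := by
            apply Finset.sum_le_sum
            intro l hl
            obtain ⟨hla, hlb⟩ := key l hl
            rcases le_or_gt t l with htl | htl
            · rw [max_eq_right (by linarith : t - l ≤ 0), mul_zero, zero_mul]
              exact mul_nonneg (Nat.cast_nonneg _)
                (mul_nonneg (by linarith) (by linarith))
            · rw [max_eq_left (by linarith : 0 ≤ t - l)]
              have hkey : (0:ℚ) ≤ (e l : ℚ) * ((l - a) * (b - t)) :=
                mul_nonneg (Nat.cast_nonneg _) (mul_nonneg (by linarith) (by linarith))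
              nlinarith [hkey]
          refine le_trans h2 (le_of_eq ?_)
          have h3 : ∀ l ∈ M, (e l : ℚ) * ((t - a) * (b - l))
              = (t - a) * b * (e l : ℚ) - (t - a) * ((e l : ℚ) * l) := by
            intro l _; ring
          rw [Finset.sum_congr rfl h3, Finset.sum_sub_distrib, ← Finset.mul_sum,
            ← Finset.mul_sum, hMtot, hMslope]
          linear_combination (2 * (t - a)) * hcb
        have hsum_le : (∑ l ∈ M, (e l : ℚ) * max (t - l) 0) ≤ c * (t - a) := by
          have hbapos : 0 < b - a := by linarith
          have hstep : (∑ l ∈ M, (e l : ℚ) * max (t - l) 0) * (b - a)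
              ≤ (c * (t - a)) * (b - a) := by
            refine le_trans hP (le_of_eq ?_)
            linear_combination (-(t - a)) * hba
          exact le_of_mul_le_mul_right hstep hbapos
        have h4 : c * max (t - a) 0 = c * (t - a) := by
          rw [max_eq_left (by linarith : 0 ≤ t - a)]
        have h5 : 0 ≤ c * max (t - b) 0 := by positivity
        linarith
  linarith

lemma nuGF_support_small {g f : ℕ} (hsmall : g - f ≤ 2) :
    Function.support (nuGF g f) ⊆ ↑({0, 1, 1/2} : Finset ℚ) := by
  intro l hl
  simp only [Function.mem_support, nuGF, nuZero, if_pos hsmall] at hl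
  simp only [Finset.coe_insert, Set.mem_insert_iff, Finset.mem_coe, Finset.mem_insert,
    Finset.mem_singleton]
  by_contra hc
  push_neg at hc
  obtain ⟨hc0, hc1, hch⟩ := hc
  apply hl
  rw [if_neg (by tauto), if_neg hch]
  norm_num

lemma nuGF_zero {g f : ℕ} : nuGF g f 0 = f := by
  by_cases hsmall : g - f ≤ 2
  · simp only [nuGF, nuZero, if_pos hsmall]
    norm_num
  · have hq : (3:ℚ) ≤ ((g - f : ℕ) : ℚ) := by exact_mod_cast (by omega : 3 ≤ g - f)
    simp only [nuGF, nuZero, if_neg hsmall]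
    rw [if_pos (by norm_num), if_neg, Nat.add_zero]
    push_neg
    constructor
    · intro h
      have : (0:ℚ) < 1 / ((g - f : ℕ) : ℚ) := by positivity
      rw [← h] at this; exact lt_irrefl 0 this
    · intro h
      have : (0:ℚ) < (((g - f : ℕ) : ℚ) - 1) / ((g - f : ℕ) : ℚ) := by
        apply div_pos <;> linarith
      rw [← h] at this; exact lt_irrefl 0 this

lemma nuGF_one {g f : ℕ} : nuGF g f 1 = f := by
  by_cases hsmall : g - f ≤ 2
  · simp only [nuGF, nuZero, if_pos hsmall]
    norm_num
  · have hq : (3:ℚ) ≤ ((g - f : ℕ) : ℚ) := by exact_mod_cast (by omega : 3 ≤ g - f)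
    simp only [nuGF, nuZero, if_neg hsmall]
    rw [if_pos (by norm_num), if_neg, Nat.add_zero]
    push_neg
    constructor
    · intro h
      have : 1 / ((g - f : ℕ) : ℚ) < 1 := by
        rw [div_lt_one (by linarith)]; linarith
      rw [← h] at this; exact lt_irrefl 1 this
    · intro h
      have : (((g - f : ℕ) : ℚ) - 1) / ((g - f : ℕ) : ℚ) < 1 := by
        rw [div_lt_one (by linarith)]; linarith
      rw [← h] at this; exact lt_irrefl 1 this

lemma nuGF_admissible {g f : ℕ} (hg : 1 ≤ g) (hf : f ≤ g) :
    IsSymAdmissibleNP g (nuGF g f) := by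
  by_cases hsmall : g - f ≤ 2
  · refine ⟨Set.Finite.subset (Finset.finite_toSet _) (nuGF_support_small hsmall), ?_, ?_, ?_, ?_⟩
    · intro l hne
      have := nuGF_support_small hsmall (by simpa using hne)
      simp only [Finset.coe_insert, Set.mem_insert_iff, Finset.mem_coe,
        Finset.mem_singleton, Finset.mem_insert] at this
      rcases this with rfl | rfl | rfl <;> norm_num
    · intro l
      by_cases h0 : l = 0
      · exact ⟨0, by rw [h0]; simp⟩
      by_cases h1 : l = 1
      · exact ⟨f, by rw [h1, nuGF_one]; simp⟩
      by_cases hh : l = 1/2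
      · refine ⟨(g : ℤ) - f, ?_⟩
        subst hh
        have : nuGF g f (1/2) = 2 * (g - f) := by
          simp only [nuGF, nuZero, if_pos hsmall]
          rw [if_neg (by norm_num), if_pos trivial]
          omega
        rw [this]
        push_cast [Nat.cast_sub hf]
        ring
      · have : nuGF g f l = 0 := by
          by_contra hne
          have := nuGF_support_small hsmall (by simpa using hne)
          simp only [Finset.coe_insert, Set.mem_insert_iff, Finset.mem_coe,
            Finset.mem_singleton, Finset.mem_insert] at this
          tauto
        exact ⟨0, by rw [this]; simp⟩
    · intro l
      simp only [nuGF, nuZero, if_pos hsmall]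
      have h1 : (1 - l = 0 ∨ 1 - l = 1) ↔ (l = 0 ∨ l = 1) := by
        constructor
        · rintro (h | h)
          · right; linarith
          · left; linarith
        · rintro (h | h)
          · right; rw [h]; ring
          · left; rw [h]; ring
      have h2 : (1 - l = 1/2) ↔ (l = 1/2) := by
        constructor <;> intro h <;> linarith
      rw [show (if 1 - l = 0 ∨ 1 - l = 1 then f else 0) = (if l = 0 ∨ l = 1 then f else 0)
        from if_congr h1 rfl rfl]
      rw [show (if 1 - l = 1/2 then 2*(g-f) else 0) = (if l = 1/2 then 2*(g-f) else 0)
        from if_congr h2 rfl rfl]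
    · rw [tot_eq_sum _ (nuGF_support_small hsmall)]
      have m0 : (0:ℚ) ∉ ({1, 1/2} : Finset ℚ) := by norm_num
      have m1 : (1:ℚ) ∉ ({1/2} : Finset ℚ) := by norm_num
      rw [Finset.sum_insert m0, Finset.sum_insert m1, Finset.sum_singleton, nuGF_zero, nuGF_one]
      have : nuGF g f (1/2) = 2 * (g - f) := by
        simp only [nuGF, nuZero, if_pos hsmall]
        rw [if_neg (by norm_num), if_pos trivial]
        omega
      rw [this]
      omega
  · have hbig : 3 ≤ g - f := by omega
    have hq : (3:ℚ) ≤ ((g - f : ℕ) : ℚ) := by exact_mod_cast hbig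
    have hqpos : (0:ℚ) < ((g - f : ℕ) : ℚ) := by linarith
    have hapos : 0 < 1/((g-f : ℕ):ℚ) := by positivity
    have ha1 : 1/((g-f : ℕ):ℚ) < 1 := by rw [div_lt_one hqpos]; linarith
    have hb1 : (((g-f : ℕ):ℚ) - 1)/((g-f : ℕ):ℚ) < 1 := by
      rw [div_lt_one hqpos]; linarith
    have hb0 : 0 < (((g-f : ℕ):ℚ) - 1)/((g-f : ℕ):ℚ) := by
      apply div_pos <;> linarith
    have va : nuGF g f (1/((g-f : ℕ):ℚ)) = g - f := by
      simp only [nuGF, nuZero, if_neg hsmall]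
      rw [if_neg (by push_neg; exact ⟨ne_of_gt hapos, ne_of_lt ha1⟩), if_pos (Or.inl trivial)]
      omega
    have vb : nuGF g f ((((g-f : ℕ):ℚ) - 1)/((g-f : ℕ):ℚ)) = g - f := by
      simp only [nuGF, nuZero, if_neg hsmall]
      rw [if_neg (by push_neg; exact ⟨ne_of_gt hb0, ne_of_lt hb1⟩), if_pos (Or.inr trivial)]
      omega
    refine ⟨Set.Finite.subset (Finset.finite_toSet _) (nuGF_support_big hbig), ?_, ?_, ?_, ?_⟩
    · intro l hne
      have := nuGF_support_big hbig (by simpa using hne)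
      simp only [Finset.coe_insert, Set.mem_insert_iff, Finset.mem_coe,
        Finset.mem_singleton, Finset.mem_insert] at this
      rcases this with rfl | rfl | rfl | rfl
      · norm_num
      · norm_num
      · constructor <;> linarith
      · constructor <;> linarith
    · intro l
      by_cases h0 : l = 0
      · exact ⟨0, by rw [h0]; simp⟩
      by_cases h1 : l = 1
      · exact ⟨f, by rw [h1, nuGF_one]; simp⟩
      by_cases ha : l = 1/((g-f : ℕ):ℚ)
      · refine ⟨1, ?_⟩
        rw [ha, va, mul_one_div, div_self (ne_of_gt hqpos)]
        norm_num
      by_cases hb : l = (((g-f : ℕ):ℚ) - 1)/((g-f : ℕ):ℚ)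
      · refine ⟨(g : ℤ) - f - 1, ?_⟩
        rw [hb, vb, mul_div_assoc', mul_div_cancel_left₀ _ (ne_of_gt hqpos)]
        push_cast [Nat.cast_sub hf]
        ring
      · have : nuGF g f l = 0 := by
          by_contra hne
          have := nuGF_support_big hbig (by simpa using hne)
          simp only [Finset.coe_insert, Set.mem_insert_iff, Finset.mem_coe,
            Finset.mem_singleton, Finset.mem_insert] at this
          tauto
        exact ⟨0, by rw [this]; simp⟩
    · intro l
      simp only [nuGF, nuZero, if_neg hsmall]
      have habsum : 1/((g-f : ℕ):ℚ) + (((g-f : ℕ):ℚ) - 1)/((g-f : ℕ):ℚ) = 1 := by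
        rw [← add_div, show (1:ℚ) + (((g-f : ℕ):ℚ) - 1) = ((g-f : ℕ):ℚ) by ring]
        exact div_self (ne_of_gt hqpos)
      have h1 : (1 - l = 0 ∨ 1 - l = 1) ↔ (l = 0 ∨ l = 1) := by
        constructor
        · rintro (h | h)
          · right; linarith
          · left; linarith
        · rintro (h | h)
          · right; rw [h]; ring
          · left; rw [h]; ring
      have h2 : (1 - l = 1/((g-f : ℕ):ℚ) ∨ 1 - l = (((g-f : ℕ):ℚ) - 1)/((g-f : ℕ):ℚ))
          ↔ (l = 1/((g-f : ℕ):ℚ) ∨ l = (((g-f : ℕ):ℚ) - 1)/((g-f : ℕ):ℚ)) := by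
        constructor
        · rintro (h | h)
          · right; linarith
          · left; linarith
        · rintro (h | h)
          · right; linarith
          · left; linarith
      rw [show (if 1 - l = 0 ∨ 1 - l = 1 then f else 0) = (if l = 0 ∨ l = 1 then f else 0)
        from if_congr h1 rfl rfl]
      rw [show (if 1 - l = 1/((g-f : ℕ):ℚ) ∨ 1 - l = (((g-f : ℕ):ℚ) - 1)/((g-f : ℕ):ℚ)
            then g - f else 0)
          = (if l = 1/((g-f : ℕ):ℚ) ∨ l = (((g-f : ℕ):ℚ) - 1)/((g-f : ℕ):ℚ) then g - f else 0)
        from if_congr h2 rfl rfl]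
    · rw [tot_eq_sum _ (nuGF_support_big hbig)]
      have m0 : (0:ℚ) ∉ ({1, 1/((g-f : ℕ):ℚ), (((g-f : ℕ):ℚ) - 1)/((g-f : ℕ):ℚ)} : Finset ℚ) := by
        simp only [Finset.mem_insert, Finset.mem_singleton]
        push_neg
        exact ⟨by norm_num, ne_of_lt hapos, ne_of_lt hb0⟩
      have m1 : (1:ℚ) ∉ ({1/((g-f : ℕ):ℚ), (((g-f : ℕ):ℚ) - 1)/((g-f : ℕ):ℚ)} : Finset ℚ) := by
        simp only [Finset.mem_insert, Finset.mem_singleton]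
        push_neg
        exact ⟨ne_of_gt ha1, ne_of_gt hb1⟩
      have m2 : 1/((g-f : ℕ):ℚ) ∉ ({(((g-f : ℕ):ℚ) - 1)/((g-f : ℕ):ℚ)} : Finset ℚ) := by
        simp only [Finset.mem_singleton]
        intro h
        rw [div_eq_div_iff (ne_of_gt hqpos) (ne_of_gt hqpos)] at h
        nlinarith
      rw [Finset.sum_insert m0, Finset.sum_insert m1, Finset.sum_insert m2,
        Finset.sum_singleton, nuGF_zero, nuGF_one, va, vb]
      omega

lemma second_diff (e : ℚ → ℕ) (hfin : (Function.support e).Finite) (x ε : ℚ) (hε : 0 < ε)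
    (hsep : ∀ l : ℚ, e l ≠ 0 → l ≠ x → ε ≤ |l - x|) :
    npConj e (x + ε) + npConj e (x - ε) - 2 * npConj e x = ε * e x := by
  set T : Finset ℚ := insert x hfin.toFinset with hTdef
  have hsup : Function.support e ⊆ ↑T := by
    intro l hl
    simp only [hTdef, Finset.coe_insert, Set.mem_insert_iff, Set.Finite.coe_toFinset]
    right; exact hl
  rw [npConj_eq_sum e hsup, npConj_eq_sum e hsup, npConj_eq_sum e hsup]
  have hcomb : ∑ l ∈ T, (e l : ℚ) * max (x + ε - l) 0 + ∑ l ∈ T, (e l : ℚ) * max (x - ε - l) 0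
      - 2 * ∑ l ∈ T, (e l : ℚ) * max (x - l) 0
      = ∑ l ∈ T, (e l : ℚ) * (max (x + ε - l) 0 + max (x - ε - l) 0 - 2 * max (x - l) 0) := by
    rw [Finset.mul_sum, ← Finset.sum_add_distrib, ← Finset.sum_sub_distrib]
    apply Finset.sum_congr rfl
    intro l _
    ring
  rw [hcomb]
  have hx : x ∈ T := Finset.mem_insert_self _ _
  rw [Finset.sum_eq_single_of_mem x hx]
  · rw [show x + ε - x = ε by ring, show x - ε - x = -ε by ring, show x - x = 0 by ring,
      max_eq_left hε.le, max_eq_right (by linarith : -ε ≤ (0:ℚ)), max_self]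
    ring
  · intro l _ hlx
    by_cases hne : e l = 0
    · rw [hne]; norm_num
    · have := hsep l hne hlx
      rcases abs_cases (l - x) with ⟨h1, h2⟩ | ⟨h1, h2⟩
      · -- l - x ≥ 0, so l ≥ x + ε
        have hl : x + ε ≤ l := by rw [h1] at this; linarith
        rw [max_eq_right (by linarith : x + ε - l ≤ 0),
          max_eq_right (by linarith : x - ε - l ≤ 0),
          max_eq_right (by linarith : x - l ≤ 0)]
        ring
      · -- l ≤ x - ε
        have hl : l ≤ x - ε := by rw [h1] at this; linarith
        rw [max_eq_left (by linarith : 0 ≤ x + ε - l),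
          max_eq_left (by linarith : 0 ≤ x - ε - l),
          max_eq_left (by linarith : 0 ≤ x - l)]
        ring_nf

lemma npConj_injective {e₁ e₂ : ℚ → ℕ} (h1 : (Function.support e₁).Finite)
    (h2 : (Function.support e₂).Finite) (h : ∀ t : ℚ, npConj e₁ t = npConj e₂ t) :
    e₁ = e₂ := by
  funext x
  set S : Finset ℚ := h1.toFinset ∪ h2.toFinset with hSdef
  set D : Finset ℚ := insert 1 ((S.erase x).image (fun l => |l - x|)) with hDdef
  have hDne : D.Nonempty := ⟨1, Finset.mem_insert_self _ _⟩
  set ε : ℚ := D.min' hDne with hεdef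
  have hεpos : 0 < ε := by
    have hmem : ε ∈ D := D.min'_mem hDne
    rcases Finset.mem_insert.mp hmem with hm | hm
    · rw [hm]; norm_num
    · obtain ⟨l, hl, hlv⟩ := Finset.mem_image.mp hm
      have hlx : l ≠ x := (Finset.mem_erase.mp hl).1
      rw [← hlv]
      exact abs_pos.mpr (sub_ne_zero.mpr hlx)
  have hsep : ∀ (e : ℚ → ℕ), Function.support e ⊆ ↑S →
      ∀ l : ℚ, e l ≠ 0 → l ≠ x → ε ≤ |l - x| := by
    intro e hsub l hne hlx
    have hlS : l ∈ S := hsub hne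
    have : |l - x| ∈ D := by
      rw [hDdef]
      apply Finset.mem_insert_of_mem
      exact Finset.mem_image_of_mem _ (Finset.mem_erase.mpr ⟨hlx, hlS⟩)
    exact Finset.min'_le _ _ this
  have hsub1 : Function.support e₁ ⊆ ↑S := by
    intro l hl; rw [hSdef]; simp only [Finset.coe_union, Set.mem_union,
      Set.Finite.coe_toFinset]; left; exact hl
  have hsub2 : Function.support e₂ ⊆ ↑S := by
    intro l hl; rw [hSdef]; simp only [Finset.coe_union, Set.mem_union,
      Set.Finite.coe_toFinset]; right; exact hl
  have d1 := second_diff e₁ h1 x ε hεpos (hsep e₁ hsub1)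
  have d2 := second_diff e₂ h2 x ε hεpos (hsep e₂ hsub2)
  rw [h (x + ε), h (x - ε), h x] at d1
  rw [d2] at d1
  have : (e₁ x : ℚ) = (e₂ x : ℚ) := mul_left_cancel₀ (ne_of_gt hεpos) d1.symm
  exact_mod_cast this

/-- For every `g ≥ 1` and `0 ≤ f ≤ g`, the Newton polygon `ν_g^f` is a symmetric
admissible Newton polygon of height `2g` with slope-`0` multiplicity `f`, and it
is the unique maximal element, for the partial order `⪯`, among all symmetric
admissible Newton polygons of height `2g` whose slope-`0` multiplicity is `f`. -/
theorem nuGF_is_unique_maximal (g f : ℕ) (hg : 1 ≤ g) (hf : f ≤ g) :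
    IsSymAdmissibleNP g (nuGF g f) ∧ nuGF g f 0 = f ∧
    (∀ e : ℚ → ℕ, IsSymAdmissibleNP g e → e 0 = f → NPOnOrAbove e (nuGF g f)) ∧
    (∀ e : ℚ → ℕ, IsSymAdmissibleNP g e → e 0 = f →
      (∀ e' : ℚ → ℕ, IsSymAdmissibleNP g e' → e' 0 = f → NPOnOrAbove e' e) →
      e = nuGF g f) := by
  refine ⟨nuGF_admissible hg hf, nuGF_zero, ?_, ?_⟩
  · intro e hadm he0
    by_cases hsmall : g - f ≤ 2
    · rw [forced_small hadm he0 hf hsmall]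
      intro t; exact le_refl _
    · exact bound_big hadm he0 hf (by omega)
  · intro e hadm he0 hmax
    by_cases hsmall : g - f ≤ 2
    · exact forced_small hadm he0 hf hsmall
    · have hbig : 3 ≤ g - f := by omega
      have hup := hmax (nuGF g f) (nuGF_admissible hg hf) nuGF_zero
      have hdown := bound_big hadm he0 hf hbig
      apply npConj_injective hadm.1 (nuGF_admissible hg hf).1
      intro t
      exact le_antisymm (hdown t) (hup t)
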